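/- (Matrix power bound via pseudospectral radius) For any square complex matrix A, any ε > 0, and all n ≥ 0, ‖Aⁿ‖ ≤ (ρ_ε(A))^{n+1} / ε, where ρ_ε(A) is the ε-pseudospectral radius of A. -/

import Mathlib

set_option synthInstance.maxHeartbeats 1000000
set_option maxHeartbeats 2000000

open Matrix Filter
open scoped Real NNReal ENNReal

/-- The ℓ²-operator norm of a complex matrix. -/
noncomputable def l2OpNorm {d : ℕ} (A : Matrix (Fin d) (Fin d) ℂ) : ℝ :=
  ‖LinearMap.toContinuousLinearMap (Matrix.toEuclideanLin A)‖

/-- The ε-pseudospectrum of a square complex matrix: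
`σ_ε(A) = σ(A) ∪ { z : ‖(A − zI)⁻¹‖ ≥ 1/ε }`. -/
noncomputable def pseudospectrum {d : ℕ} (ε : ℝ) (A : Matrix (Fin d) (Fin d) ℂ) : Set ℂ :=
  spectrum ℂ A ∪ { z : ℂ | 1 / ε ≤ l2OpNorm (A - z • 1)⁻¹ }

/-- The ε-pseudospectral radius `ρ_ε(A) = sup{ |z| : z ∈ σ_ε(A) }`. -/
noncomputable def pseudospectralRadius {d : ℕ} (ε : ℝ) (A : Matrix (Fin d) (Fin d) ℂ) : ℝ :=
  sSup ((fun z : ℂ => ‖z‖) '' pseudospectrum ε A)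

theorem ringEquiv_ringInverse {R S : Type*} [Ring R] [Ring S] (e : R ≃+* S) (x : R) :
    e (Ring.inverse x) = Ring.inverse (e x) := by
  by_cases hx : IsUnit x
  · obtain ⟨u, rfl⟩ := hx
    have h : IsUnit (e (u : R)) := u.isUnit.map e
    rw [Ring.inverse_unit u, ← h.unit_spec, Ring.inverse_unit h.unit]
    refine (Units.inv_eq_of_mul_eq_one_right ?_).symm
    rw [h.unit_spec, ← _root_.map_mul]; simp
  · rw [Ring.inverse_non_unit _ hx, Ring.inverse_non_unit, map_zero]
    exact fun h => hx (by simpa using h.map e.symm)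

theorem ring_inverse_neg' {R : Type*} [Ring R] (x : R) :
    Ring.inverse (-x) = -Ring.inverse x := by
  by_cases hx : IsUnit x
  · obtain ⟨u, rfl⟩ := hx
    have h : IsUnit (-(u : R)) := u.isUnit.neg
    rw [Ring.inverse_unit u, ← h.unit_spec, Ring.inverse_unit h.unit]
    refine Units.inv_eq_of_mul_eq_one_right ?_
    rw [h.unit_spec]; simp [mul_neg, neg_mul]
  · rw [Ring.inverse_non_unit _ hx, Ring.inverse_non_unit, neg_zero]
    exact fun h => hx (by simpa using h.neg)

theorem ring_inverse_unit_smul {K A : Type*} [Field K] [Ring A] [Algebra K A]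
    {w : K} (hw : w ≠ 0) (u : Aˣ) :
    Ring.inverse (w • (u : A)) = w⁻¹ • (↑u⁻¹ : A) := by
  have h2 : (w • (u : A)) * (w⁻¹ • (↑u⁻¹ : A)) = 1 := by
    rw [smul_mul_smul_comm, mul_inv_cancel₀ hw, Units.mul_inv, one_smul]
  have h3 : (w⁻¹ • (↑u⁻¹ : A)) * (w • (u : A)) = 1 := by
    rw [smul_mul_smul_comm, inv_mul_cancel₀ hw, Units.inv_mul, one_smul]
  exact Ring.inverse_unit ⟨w • (u : A), w⁻¹ • (↑u⁻¹ : A), h2, h3⟩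

theorem l2OpNorm_eq' {d : ℕ} (A : Matrix (Fin d) (Fin d) ℂ) :
    l2OpNorm A = ‖Matrix.toEuclideanCLM (𝕜 := ℂ) A‖ := rfl

theorem l2OpNorm_inv_eq_resolvent {d : ℕ} (A : Matrix (Fin d) (Fin d) ℂ) (z : ℂ) :
    l2OpNorm (A - z • 1)⁻¹
      = ‖resolvent (Matrix.toEuclideanCLM (𝕜 := ℂ) A) z‖ := by
  set φ := Matrix.toEuclideanCLM (𝕜 := ℂ) (n := Fin d)
  show ‖φ (A - z • 1)⁻¹‖ = _
  rw [Matrix.nonsing_inv_eq_ringInverse, resolvent]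
  rw [show φ (Ring.inverse (A - z • 1)) = Ring.inverse (φ (A - z • 1)) from
    ringEquiv_ringInverse φ.toRingEquiv (A - z • 1)]
  rw [_root_.map_sub, _root_.map_smul, _root_.map_one]
  rw [show φ A - z • 1 = -(algebraMap ℂ _ z - φ A) by
    rw [Algebra.algebraMap_eq_smul_one, neg_sub]]
  rw [ring_inverse_neg', norm_neg]

theorem power_bound_aux {d : ℕ} (A : Matrix (Fin d) (Fin d) ℂ) (ε : ℝ) (hε : 0 < ε) (n : ℕ)
    (ρ r : ℝ) (hρ0 : 0 ≤ ρ)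
    (hmem_le : ∀ z ∈ pseudospectrum ε A, ‖z‖ ≤ ρ) (hr : ρ < r) :
    ‖(Matrix.toEuclideanCLM (𝕜 := ℂ) A) ^ n‖ ≤ r ^ (n + 1) / ε := by
  set a := Matrix.toEuclideanCLM (𝕜 := ℂ) A with ha
  have hr0 : 0 < r := lt_of_le_of_lt hρ0 hr
  -- spectral radius bound
  have hsr : spectralRadius ℂ a ≤ ENNReal.ofReal ρ := by
    rw [spectralRadius]
    refine iSup₂_le fun z hz => ?_
    rw [show ((‖z‖₊ : ℝ≥0) : ℝ≥0∞) = ENNReal.ofReal ‖z‖ from (ofReal_norm z).symm]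
    refine ENNReal.ofReal_le_ofReal ?_
    have : z ∈ spectrum ℂ A := by rwa [ha, AlgEquiv.spectrum_eq] at hz
    simpa using hmem_le z (Set.mem_union_left _ this)
  set r' : ℝ≥0 := ⟨r⁻¹, by positivity⟩ with hr'def
  have hr'0 : 0 < r' := by
    rw [← NNReal.coe_lt_coe]
    show (0:ℝ) < r⁻¹
    positivity
  have hr'lt : (r' : ℝ≥0∞) < (spectralRadius ℂ a)⁻¹ := by
    have h1 : (r' : ℝ≥0∞) = (ENNReal.ofReal r)⁻¹ := by
      rw [← ENNReal.ofReal_inv_of_pos hr0]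
      simp [hr'def, ENNReal.ofReal, Real.toNNReal_of_nonneg (by positivity : (0:ℝ) ≤ r⁻¹)]; rfl
    rw [h1, ENNReal.inv_lt_inv]
    exact lt_of_le_of_lt hsr (by exact_mod_cast ENNReal.ofReal_lt_ofReal_iff_of_nonneg hρ0 |>.mpr hr)
  set f : ℂ → _ := fun w : ℂ => Ring.inverse (1 - w • a) with hf
  have hdiff := spectrum.differentiableOn_inverse_one_sub_smul hr'lt
  have H₁ : HasFPowerSeriesOnBall f (cauchyPowerSeries f 0 r') 0 r' :=
    hdiff.hasFPowerSeriesOnBall hr'0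
  have H₂ := spectrum.hasFPowerSeriesOnBall_inverse_one_sub_smul ℂ a
  have heq : (fun m => ContinuousMultilinearMap.mkPiRing ℂ (Fin m) (a ^ m))
      = cauchyPowerSeries f 0 r' :=
    H₂.hasFPowerSeriesAt.eq_formalMultilinearSeries H₁.hasFPowerSeriesAt
  -- pointwise bound on the circle
  have hC : ∀ θ : ℝ, ‖f (circleMap 0 (r' : ℝ) θ)‖ ≤ r / ε := by
    intro θ
    have hr'coe : (r' : ℝ) = r⁻¹ := rfl
    set w := circleMap 0 (r' : ℝ) θ with hw
    have hwabs : ‖w‖ = r⁻¹ := by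
      rw [hw, norm_circleMap_zero, hr'coe, abs_of_pos (by positivity)]
    have hw0 : w ≠ 0 := by
      rw [hw]
      exact circleMap_ne_center (by rw [hr'coe]; positivity)
    set z := w⁻¹ with hz
    have hzabs : ‖z‖ = r := by rw [hz, norm_inv, hwabs, inv_inv]
    have hznm : z ∉ pseudospectrum ε A := by
      intro hmem
      exact absurd (hzabs ▸ hmem_le z hmem) (not_le.mpr hr)
    rw [pseudospectrum, Set.mem_union, not_or] at hznm
    obtain ⟨hzs, hzres⟩ := hznm
    have hzs' : z ∉ spectrum ℂ a := by rwa [ha, AlgEquiv.spectrum_eq]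
    have hu : IsUnit (algebraMap ℂ _ z - a) := spectrum.notMem_iff.mp hzs'
    have hres_le : ‖resolvent a z‖ ≤ 1 / ε := by
      rw [Set.mem_setOf_eq, not_le, l2OpNorm_inv_eq_resolvent] at hzres
      exact hzres.le
    set u := hu.unit with hudef
    have hkey : 1 - w • a = w • (u : _) := by
      rw [hudef, hu.unit_spec, smul_sub, Algebra.algebraMap_eq_smul_one, smul_smul,
        mul_inv_cancel₀ hw0, one_smul]
    have hfw : f w = w⁻¹ • ((u⁻¹ : _) : EuclideanSpace ℂ (Fin d) →L[ℂ] EuclideanSpace ℂ (Fin d)) := by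
      show Ring.inverse (1 - w • a) = _
      rw [hkey, ring_inverse_unit_smul hw0 u]
    rw [hfw,
      norm_smul w⁻¹ ((u⁻¹ : _) : EuclideanSpace ℂ (Fin d) →L[ℂ] EuclideanSpace ℂ (Fin d))]
    have h2 : resolvent a z = ((u⁻¹ : _) : EuclideanSpace ℂ (Fin d) →L[ℂ] EuclideanSpace ℂ (Fin d)) := by
      rw [resolvent, ← IsUnit.unit_spec hu, Ring.inverse_unit]
    have h1 : ‖w⁻¹‖ = r := by
      rw [← hzabs, hz]
    rw [h1, ← h2]
    calc r * ‖resolvent a z‖ ≤ r * (1/ε) := mul_le_mul_of_nonneg_left hres_le hr0.le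
      _ = r / ε := by ring
  have hr'coe : (r' : ℝ) = r⁻¹ := rfl
  have hcont : Continuous fun θ : ℝ => ‖f (circleMap 0 (r' : ℝ) θ)‖ :=
    (hdiff.continuousOn.comp_continuous (continuous_circleMap 0 (r' : ℝ))
      (fun θ => circleMap_mem_closedBall 0 (NNReal.coe_nonneg r') θ)).norm
  have hInt : IntervalIntegrable (fun θ : ℝ => ‖f (circleMap 0 (r' : ℝ) θ)‖)
      MeasureTheory.volume 0 (2 * π) := hcont.intervalIntegrable _ _
  have hIle : (∫ θ : ℝ in (0 : ℝ)..2 * π, ‖f (circleMap 0 (r' : ℝ) θ)‖) ≤ 2 * π * (r / ε) := by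
    calc (∫ θ : ℝ in (0 : ℝ)..2 * π, ‖f (circleMap 0 (r' : ℝ) θ)‖)
        ≤ ∫ _ : ℝ in (0 : ℝ)..2 * π, (r / ε) :=
          intervalIntegral.integral_mono_on (by positivity) hInt intervalIntegrable_const
            (fun θ _ => hC θ)
      _ = 2 * π * (r / ε) := by
          rw [intervalIntegral.integral_const, smul_eq_mul, sub_zero]
  have habs : |(r' : ℝ)|⁻¹ = r := by
    rw [abs_of_nonneg (NNReal.coe_nonneg r'), hr'coe, inv_inv]
  calc ‖a ^ n‖
      = ‖cauchyPowerSeries f 0 (r' : ℝ) n‖ := by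
        rw [show cauchyPowerSeries f 0 (r' : ℝ) n
            = ContinuousMultilinearMap.mkPiRing ℂ (Fin n) (a ^ n) from (congrFun heq n).symm,
          ContinuousMultilinearMap.norm_mkPiRing]
    _ ≤ ((2 * π)⁻¹ * ∫ θ : ℝ in (0 : ℝ)..2 * π, ‖f (circleMap 0 (r' : ℝ) θ)‖)
          * |(r' : ℝ)|⁻¹ ^ n := norm_cauchyPowerSeries_le f 0 (r' : ℝ) n
    _ ≤ ((2 * π)⁻¹ * (2 * π * (r / ε))) * |(r' : ℝ)|⁻¹ ^ n := by
        have hπ : (0:ℝ) < (2 * π)⁻¹ := by positivity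
        gcongr
    _ = (r / ε) * r ^ n := by
        rw [habs, inv_mul_cancel_left₀ (by positivity : (2 * π : ℝ) ≠ 0)]
    _ = r ^ (n + 1) / ε := by rw [pow_succ]; ring

/-- Matrix power bound via the pseudospectral radius: for any square complex matrix `A`,
any `ε > 0` and all `n ≥ 0`, `‖Aⁿ‖ ≤ ρ_ε(A)^{n+1} / ε`. -/
theorem matrix_power_le_pseudospectralRadius
    {d : ℕ} (A : Matrix (Fin d) (Fin d) ℂ) (ε : ℝ) (hε : 0 < ε) (n : ℕ) :
    l2OpNorm (A ^ n) ≤ (pseudospectralRadius ε A) ^ (n + 1) / ε := by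
  set ρ := pseudospectralRadius ε A with hρ
  have hρ0 : 0 ≤ ρ := by
    refine Real.sSup_nonneg ?_
    rintro x ⟨z, _, rfl⟩
    exact norm_nonneg z
  rcases Nat.eq_zero_or_pos d with hd | hd
  · subst hd
    have hL : l2OpNorm (A ^ n) = 0 := by
      rw [l2OpNorm, Subsingleton.elim (LinearMap.toContinuousLinearMap
        (Matrix.toEuclideanLin (A ^ n))) 0, norm_zero]
    rw [hL]
    exact div_nonneg (pow_nonneg hρ0 _) hε.le
  · haveI : Nonempty (Fin d) := ⟨⟨0, hd⟩⟩
    haveI : Nontrivial (EuclideanSpace ℂ (Fin d)) := (WithLp.equiv 2 (Fin d → ℂ)).nontrivial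
    set a := Matrix.toEuclideanCLM (𝕜 := ℂ) A with ha
    have hres : Tendsto (resolvent a) (Bornology.cobounded ℂ) (nhds 0) :=
      spectrum.resolvent_tendsto_cobounded a
    have hev : ∀ᶠ z in Bornology.cobounded ℂ, ‖resolvent a z‖ < 1/ε := by
      have := hres.eventually (Metric.ball_mem_nhds (0 : _) (by positivity : (0:ℝ) < 1/ε))
      filter_upwards [this] with z hz using by simpa [mem_ball_zero_iff] using hz
    obtain ⟨B, hB⟩ : ∃ B, {z : ℂ | ‖resolvent a z‖ < 1/ε}ᶜ ⊆ Metric.closedBall 0 B := by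
      have : Bornology.IsBounded {z : ℂ | ‖resolvent a z‖ < 1/ε}ᶜ := by
        rw [Bornology.isBounded_def, compl_compl]
        exact hev
      exact this.subset_closedBall 0
    have hBdd : BddAbove ((fun z : ℂ => ‖z‖) '' pseudospectrum ε A) := by
      refine ⟨max ‖a‖ B, ?_⟩
      rintro x ⟨z, hz, rfl⟩
      rcases hz with hz | hz
      · refine le_max_of_le_left ?_
        have : z ∈ spectrum ℂ a := by rwa [ha, AlgEquiv.spectrum_eq]
        simpa using spectrum.norm_le_norm_of_mem this
      · refine le_max_of_le_right ?_
        by_contra hzB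
        push_neg at hzB
        have hz' : z ∉ Metric.closedBall (0:ℂ) B := by
          simp only [Metric.mem_closedBall, dist_zero_right, not_le]
          exact hzB
        have : z ∈ {z : ℂ | ‖resolvent a z‖ < 1/ε} := by
          by_contra h; exact hz' (hB h)
        rw [Set.mem_setOf_eq] at this hz
        rw [l2OpNorm_inv_eq_resolvent] at hz
        exact absurd (lt_of_le_of_lt hz this) (lt_irrefl _)
    have hmem_le : ∀ z ∈ pseudospectrum ε A, ‖z‖ ≤ ρ :=
      fun z hz => le_csSup hBdd ⟨z, hz, rfl⟩
    have hLHS : l2OpNorm (A ^ n) = ‖a ^ n‖ := by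
      rw [l2OpNorm_eq', ha, _root_.map_pow]
    rw [hLHS]
    have key : ∀ r : ℝ, ρ < r → ‖a ^ n‖ ≤ r ^ (n + 1) / ε := fun r hr =>
      power_bound_aux A ε hε n ρ r hρ0 hmem_le hr
    have cont : Tendsto (fun r : ℝ => r ^ (n + 1) / ε) (nhdsWithin ρ (Set.Ioi ρ))
        (nhds (ρ ^ (n + 1) / ε)) :=
      (((continuous_pow (n + 1)).div_const ε).tendsto ρ).mono_left nhdsWithin_le_nhds
    exact ge_of_tendsto cont (eventually_nhdsWithin_of_forall (fun r hr => key r hr))
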